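/- Let R ⊆ {1,…,m}. For realized test statistics x ∈ ℝ^m, the one-sided step-up procedure selects Ŝ ⊇ R if and only if there exist an integer k with 0 ≤ k ≤ m − |R| and a bijection σ of {1,…,m} onto itself such that R ⊆ σ^{-1}({k+1,…,m}), x_{σ^{-1}(j)} < x̄_j for all j = 1,…,k, and x_{σ^{-1}(j)} ≥ x̄_{k+1} for all j = k+1,…,m. -/

import Mathlib

open MeasureTheory Filter

variable {m : ℕ}

/-- `l` enumerates all indices of `Fin m`, sorted in ascending order of `x`. -/
def SortedEnumAsc (x : Fin m → ℝ) (l : List (Fin m)) : Prop :=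
  l.Nodup ∧ (∀ i : Fin m, i ∈ l) ∧ l.Pairwise fun i j => x i ≤ x j

/-- The insignificant set produced by the one-sided step-up algorithm: walking
up the ascending-sorted list with step counter `j`, an index is declared
insignificant while its statistic is below the `j`-th threshold; as soon as a
statistic reaches its threshold the algorithm stops (all remaining indices are
significant). -/
noncomputable def stepUpInsig (xbar : ℕ → ℝ) (x : Fin m → ℝ) :
    List (Fin m) → ℕ → Finset (Fin m)
  | [], _ => ∅
  | h :: t, j =>
      if xbar j ≤ x h then ∅
      else insert h (stepUpInsig xbar x t (j + 1))

/-- The one-sided step-up procedure run on `x` returns exactly the significant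
set `S` (the complement of the insignificant set). -/
def SelectsStepUp (xbar : ℕ → ℝ) (x : Fin m → ℝ) (S : Finset (Fin m)) : Prop :=
  ∃ l : List (Fin m), SortedEnumAsc x l ∧ (stepUpInsig xbar x l 1)ᶜ = S

/-- The one-sided step-up procedure run on `x` selects a set containing `R`. -/
def SelectsStepUpSuperset (xbar : ℕ → ℝ) (x : Fin m → ℝ) (R : Finset (Fin m)) : Prop :=
  ∃ l : List (Fin m), SortedEnumAsc x l ∧ R ⊆ (stepUpInsig xbar x l 1)ᶜ

lemma insig_spec (xbar : ℕ → ℝ) (x : Fin m → ℝ) :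
    ∀ (l : List (Fin m)) (j : ℕ),
      ∃ n, n ≤ l.length ∧ stepUpInsig xbar x l j = (l.take n).toFinset ∧
        (∀ i (hi : i < l.length), i < n → x (l[i]'hi) < xbar (j + i)) ∧
        (∀ hn : n < l.length, xbar (j + n) ≤ x (l[n]'hn)) := by
  intro l
  induction l with
  | nil =>
      intro j
      exact ⟨0, by simp, by simp [stepUpInsig], by simp, by simp⟩
  | cons h t ih =>
      intro j
      by_cases hc : xbar j ≤ x h
      · exact ⟨0, by simp, by simp [stepUpInsig, hc], by simp, fun _ => by simpa using hc⟩
      · obtain ⟨n, hn, heq, hlt, hstop⟩ := ih (j + 1)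
        refine ⟨n + 1, by simpa using hn, ?_, ?_, ?_⟩
        · simp [stepUpInsig, hc, heq, List.take_succ_cons]
        · intro i hi hin
          match i with
          | 0 => simpa using lt_of_not_ge hc
          | (i' + 1) =>
              have := hlt i' (by simpa using hi) (by omega)
              have ha : j + (i' + 1) = (j + 1) + i' := by omega
              rw [ha]
              simpa using this
        · intro hlen
          have := hstop (by simpa using hlen)
          have ha : j + (n + 1) = (j + 1) + n := by omega
          rw [ha]
          simpa using this

lemma exists_sortedEnum (x : Fin m → ℝ) : ∃ l, SortedEnumAsc x l := by
  refine ⟨(List.finRange m).map (Tuple.sort x), ?_, ?_, ?_⟩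
  · exact (List.nodup_finRange m).map (Tuple.sort x).injective
  · intro i
    simp only [List.mem_map]
    exact ⟨(Tuple.sort x).symm i, List.mem_finRange _, by simp⟩
  · refine List.Pairwise.map _ ?_ (List.pairwise_lt_finRange m)
    intro a b hab
    exact Tuple.monotone_sort x (le_of_lt hab)

lemma sortedEnum_length {x : Fin m → ℝ} {l : List (Fin m)} (h : SortedEnumAsc x l) :
    l.length = m := by
  obtain ⟨hnd, hmem, _⟩ := h
  have h1 : l.toFinset = Finset.univ := by ext i; simp [hmem i]
  have := List.toFinset_card_of_nodup hnd
  rw [h1] at this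
  simp at this
  omega

lemma nodup_getElem_inj {l : List (Fin m)} (hnd : l.Nodup) {i j : ℕ}
    (hi : i < l.length) (hj : j < l.length) (h : l[i]'hi = l[j]'hj) : i = j := by
  have hinj := List.nodup_iff_injective_get.mp hnd
  have : l.get ⟨i, hi⟩ = l.get ⟨j, hj⟩ := by simpa using h
  have := hinj this
  simpa [Fin.mk.injEq] using this

lemma sorted_le {x : Fin m → ℝ} {l : List (Fin m)}
    (hsort : l.Pairwise fun i j => x i ≤ x j) {i j : ℕ}
    (hi : i < l.length) (hj : j < l.length) (hij : i ≤ j) :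
    x (l[i]'hi) ≤ x (l[j]'hj) := by
  rcases eq_or_lt_of_le hij with h | h
  · subst h; rfl
  · have := List.pairwise_iff_get.mp hsort ⟨i, hi⟩ ⟨j, hj⟩ h
    simpa using this

/-- **Geometry of the event `Ŝ ⊇ R` for one-sided step-up rules.** The one-sided
step-up procedure selects `Ŝ ⊇ R` if and only if there exist `k` with
`0 ≤ k ≤ m - |R|` and a bijection `σ` of `{1,…,m}` (here a permutation of
`Fin m`, whose one-based rank of `h` is `σ h + 1`) such that
`R ⊆ σ⁻¹({k+1,…,m})`, `x_{σ⁻¹(j)} < x̄_j` for `j = 1,…,k`, and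
`x_{σ⁻¹(j)} ≥ x̄_{k+1}` for `j = k+1,…,m`. -/
theorem stepup_superset_geometry
    (hm : 0 < m)
    (xbar : ℕ → ℝ) (hxmono : ∀ j k, 1 ≤ j → j ≤ k → k ≤ m → xbar j ≤ xbar k)
    (x : Fin m → ℝ) (R : Finset (Fin m)) :
    SelectsStepUpSuperset xbar x R ↔
      ∃ k : ℕ, k ≤ m - R.card ∧
        ∃ σ : Equiv.Perm (Fin m),
          (∀ r ∈ R, k ≤ (σ r : ℕ)) ∧
          (∀ j : Fin m, (j : ℕ) + 1 ≤ k → x (σ.symm j) < xbar ((j : ℕ) + 1)) ∧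
          (∀ j : Fin m, k ≤ (j : ℕ) → xbar (k + 1) ≤ x (σ.symm j)) := by
  constructor
  · rintro ⟨l, hse, hsub⟩
    have hlen : l.length = m := sortedEnum_length hse
    obtain ⟨hnd, hmem, hsort⟩ := hse
    obtain ⟨n, hnle, heq, hlt, hstop⟩ := insig_spec xbar x l 1
    set f : Fin m → Fin m := fun i => l[(i : ℕ)]'(lt_of_lt_of_eq i.isLt hlen.symm) with hf
    have hfinj : Function.Injective f := by
      intro a b hab
      exact Fin.ext (nodup_getElem_inj hnd _ _ hab)
    have hfbij : Function.Bijective f := hfinj.bijective_of_finite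
    set σ : Equiv.Perm (Fin m) := (Equiv.ofBijective f hfbij).symm with hσ
    have hσsymm : ∀ j : Fin m, σ.symm j = f j := fun j => rfl
    have hfσ : ∀ r : Fin m, f (σ r) = r := by
      intro r
      rw [← hσsymm]
      exact σ.symm_apply_apply r
    refine ⟨n, ?_, σ, ?_, ?_, ?_⟩
    · have hcard : (stepUpInsig xbar x l 1).card = n := by
        rw [heq, List.toFinset_card_of_nodup ((List.take_sublist n l).nodup hnd),
          List.length_take]
        omega
      have hle := Finset.card_le_card hsub
      rw [Finset.card_compl, hcard] at hle
      simp only [Fintype.card_fin] at hle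
      omega
    · intro r hr
      by_contra hlt'
      push_neg at hlt'
      have hr' : r ∈ stepUpInsig xbar x l 1 := by
        rw [heq, List.mem_toFinset]
        refine List.mem_iff_getElem.mpr ⟨(σ r : ℕ), ?_, ?_⟩
        · rw [List.length_take]; omega
        · rw [List.getElem_take]
          exact hfσ r
      exact (Finset.mem_compl.mp (hsub hr)) hr'
    · intro j hj
      have := hlt (j : ℕ) (lt_of_lt_of_eq j.isLt hlen.symm) (by omega)
      rw [hσsymm]
      simpa [Nat.add_comm] using this
    · intro j hj
      have hjm : (j : ℕ) < m := j.isLt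
      have hnm : n < l.length := by omega
      have h1 := hstop hnm
      have h2 := sorted_le hsort hnm (lt_of_lt_of_eq j.isLt hlen.symm) hj
      rw [hσsymm]
      calc xbar (n + 1) = xbar (1 + n) := by rw [Nat.add_comm]
        _ ≤ x (l[(n : ℕ)]'hnm) := h1
        _ ≤ _ := h2
  · rintro ⟨k, hk, σ, h1, h2, h3⟩
    obtain ⟨l, hse⟩ := exists_sortedEnum x
    have hlen : l.length = m := sortedEnum_length hse
    obtain ⟨hnd, hmem, hsort⟩ := hse
    obtain ⟨n, hnle, heq, hlt, hstop⟩ := insig_spec xbar x l 1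
    refine ⟨l, ⟨hnd, hmem, hsort⟩, ?_⟩
    by_cases hkm : k < m
    · -- main case
      have hnk : n ≤ k := by
        by_contra hc
        push_neg at hc
        have key : ∀ i : ℕ, (h : i ≤ k) → (σ (l[i]'(by omega)) : ℕ) < k := by
          intro i hik
          have hi : i < l.length := by omega
          by_contra hge
          push_neg at hge
          have h3' := h3 (σ (l[i]'hi)) hge
          rw [Equiv.symm_apply_apply] at h3'
          have hxk := hlt k (by omega) hc
          have hmono2 : x (l[i]'hi) ≤ x (l[k]'(by omega)) :=
            sorted_le hsort hi (by omega) hik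
          rw [Nat.add_comm] at hxk
          linarith
        let φ : Fin (k + 1) → Fin k := fun i =>
          ⟨(σ (l[(i : ℕ)]'(by have := i.isLt; omega)) : ℕ), key i (by have := i.isLt; omega)⟩
        have hφ : Function.Injective φ := by
          intro a b hab
          simp only [φ, Fin.mk.injEq] at hab
          have hσeq : σ (l[(a : ℕ)]'(by have := a.isLt; omega))
              = σ (l[(b : ℕ)]'(by have := b.isLt; omega)) := Fin.ext hab
          have hleq := σ.injective hσeq
          exact Fin.ext (nodup_getElem_inj hnd _ _ hleq)
        have := Fintype.card_le_of_injective φ hφ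
        simp only [Fintype.card_fin] at this
        omega
      intro r hr
      rw [Finset.mem_compl, heq, List.mem_toFinset]
      intro hmem'
      obtain ⟨i, hi, hieq⟩ := List.mem_iff_getElem.mp hmem'
      rw [List.length_take] at hi
      have hi2 : i < l.length := by omega
      have hin : i < n := by omega
      rw [List.getElem_take] at hieq
      have hx := hlt i hi2 hin
      rw [hieq] at hx
      have hmx : xbar (1 + i) ≤ xbar (k + 1) := hxmono _ _ (by omega) (by omega) (by omega)
      have hk3 := h3 (σ r) (h1 r hr)
      rw [Equiv.symm_apply_apply] at hk3
      linarith
    · -- k ≥ m : R is empty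
      push_neg at hkm
      have hRm : R.card ≤ m := by
        have := Finset.card_le_univ R
        simpa using this
      have hR0 : R.card = 0 := by omega
      have : R = ∅ := Finset.card_eq_zero.mp hR0
      simp [this]
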